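/- If an alternating cycle C in the breakpoint graph is unbalanced and clean, then a single indel (an insertion of intergenic nucleotides on an origin edge if C is positive, or a virtual insertion on a target edge if C is negative) makes C balanced, achieving Δc = 0 and Δc_g = 1. -/

import Mathlib

/-- A cycle of the labeled intergenic breakpoint graph, recorded by the weights of its
origin edges, the weights of its target edges, and whether it is clean (no labeled edge). -/
structure Cyc where
  ow : List ℕ
  tw : List ℕ
  clean : Bool

/-- A cycle is good when it is clean and balanced. -/
def Cyc.goodB (c : Cyc) : Bool := c.clean && (c.ow.sum == c.tw.sum)

/-- If an alternating cycle `C` of the breakpoint graph (the graph being the list of its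
cycles `pre ++ C :: post`) is unbalanced and clean, then a single indel — an insertion of
`w` intergenic nucleotides on one origin edge of `C` if `C` is positive, or a virtual
insertion of `w` nucleotides on one target edge if `C` is negative — makes `C` balanced
(hence good), achieving `Δc = 0` (the number of cycles is unchanged) and `Δc_g = 1`
(the number of good cycles increases by one). -/
lemma set0_sum (l : List ℕ) (hl : l ≠ []) (w : ℕ) :
    (l.set 0 (l.getD 0 0 + w)).sum = l.sum + w := by
  cases l with
  | nil => exact absurd rfl hl
  | cons a t => simp [List.set]; omega

theorem stmt7 (pre post : List Cyc) (C : Cyc)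
    (hclean : C.clean = true) (hunbal : C.ow.sum ≠ C.tw.sum)
    (how : C.ow ≠ []) (htw : C.tw ≠ []) :
    ∃ (C' : Cyc) (w : ℕ),
      ((C.ow.sum < C.tw.sum ∧ ∃ i < C.ow.length,
          C' = ⟨C.ow.set i (C.ow.getD i 0 + w), C.tw, C.clean⟩) ∨
       (C.tw.sum < C.ow.sum ∧ ∃ j < C.tw.length,
          C' = ⟨C.ow, C.tw.set j (C.tw.getD j 0 + w), C.clean⟩)) ∧
      C'.goodB = true ∧
      (pre ++ C' :: post).length = (pre ++ C :: post).length ∧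
      (pre ++ C' :: post).countP Cyc.goodB = (pre ++ C :: post).countP Cyc.goodB + 1 := by
  have hbad : C.goodB = false := by
    simp [Cyc.goodB, hunbal]
  rcases Nat.lt_or_ge C.ow.sum C.tw.sum with h | h
  · have hsum : (C.ow.set 0 (C.ow.getD 0 0 + (C.tw.sum - C.ow.sum))).sum = C.tw.sum := by
      rw [set0_sum C.ow how]; omega
    refine ⟨⟨C.ow.set 0 (C.ow.getD 0 0 + (C.tw.sum - C.ow.sum)), C.tw, C.clean⟩,
      C.tw.sum - C.ow.sum, Or.inl ⟨h, 0, List.length_pos_iff.mpr how, rfl⟩, ?_, by simp, ?_⟩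
    · simp only [Cyc.goodB, hclean]; simp only [List.getD] at hsum; simp [hsum]
    · simp only [List.countP_append, List.countP_cons, hbad]
      have : Cyc.goodB ⟨C.ow.set 0 (C.ow.getD 0 0 + (C.tw.sum - C.ow.sum)), C.tw, C.clean⟩
          = true := by simp only [Cyc.goodB, hclean]; simp only [List.getD] at hsum; simp [hsum]
      rw [this]; simp; omega
  · have h' : C.tw.sum < C.ow.sum := lt_of_le_of_ne h (fun e => hunbal e.symm)
    have hsum : (C.tw.set 0 (C.tw.getD 0 0 + (C.ow.sum - C.tw.sum))).sum = C.ow.sum := by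
      rw [set0_sum C.tw htw]; omega
    refine ⟨⟨C.ow, C.tw.set 0 (C.tw.getD 0 0 + (C.ow.sum - C.tw.sum)), C.clean⟩,
      C.ow.sum - C.tw.sum, Or.inr ⟨h', 0, List.length_pos_iff.mpr htw, rfl⟩, ?_, by simp, ?_⟩
    · simp only [Cyc.goodB, hclean]; simp only [List.getD] at hsum; simp [hsum]
    · simp only [List.countP_append, List.countP_cons, hbad]
      have : Cyc.goodB ⟨C.ow, C.tw.set 0 (C.tw.getD 0 0 + (C.ow.sum - C.tw.sum)), C.clean⟩
          = true := by simp only [Cyc.goodB, hclean]; simp only [List.getD] at hsum; simp [hsum]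
      rw [this]; simp; omega
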